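/- Let D ≥ 1, ℏ > 0, ψ ∈ 𝒮(ℝ^D; ℂ) a Schwartz function, j ∈ {1,…,D}, and x₀, p₀ ∈ ℝ. Then ‖(x_j − x₀)·ψ‖_{L²(ℝ^D)} + ‖−iℏ ∂_{x_j} ψ − p₀·ψ‖_{L²(ℝ^D)} ≥ √ℏ · ‖ψ‖_{L²(ℝ^D)}. -/

import Mathlib

set_option maxHeartbeats 1000000
open MeasureTheory

lemma integral_cauchy_schwarz {α : Type*} [MeasurableSpace α] {μ : Measure α} {f g : α → ℝ}
    (hf2 : Integrable (fun x => f x ^ 2) μ) (hg2 : Integrable (fun x => g x ^ 2) μ)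
    (hfg : Integrable (fun x => f x * g x) μ) :
    ∫ x, f x * g x ∂μ ≤ Real.sqrt (∫ x, f x ^ 2 ∂μ) * Real.sqrt (∫ x, g x ^ 2 ∂μ) := by
  set A := ∫ x, f x ^ 2 ∂μ with hA
  set B := ∫ x, g x ^ 2 ∂μ with hB
  set C := ∫ x, f x * g x ∂μ with hC
  have hA0 : 0 ≤ A := integral_nonneg fun x => sq_nonneg _
  have hB0 : 0 ≤ B := integral_nonneg fun x => sq_nonneg _
  have key : ∀ t s : ℝ, 0 ≤ t ^ 2 * A - 2 * (t * s) * C + s ^ 2 * B := by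
    intro t s
    have h0 : 0 ≤ ∫ x, (t * f x - s * g x) ^ 2 ∂μ := integral_nonneg fun x => sq_nonneg _
    have hexp : ∫ x, (t * f x - s * g x) ^ 2 ∂μ = t ^ 2 * A - 2 * (t * s) * C + s ^ 2 * B := by
      have hptw : ∀ x, (t * f x - s * g x) ^ 2
          = t ^ 2 * f x ^ 2 - 2 * (t * s) * (f x * g x) + s ^ 2 * g x ^ 2 := fun x => by ring
      simp_rw [hptw]
      have h1 : Integrable (fun x => t ^ 2 * f x ^ 2 - 2 * (t * s) * (f x * g x)) μ :=
        (hf2.const_mul _).sub (hfg.const_mul _)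
      have h2 : Integrable (fun x => s ^ 2 * g x ^ 2) μ := hg2.const_mul _
      rw [integral_add h1 h2, integral_sub (hf2.const_mul _) (hfg.const_mul _),
        integral_const_mul, integral_const_mul, integral_const_mul]
    linarith [hexp ▸ h0]
  rcases le_or_gt C 0 with hCneg | hCpos
  · exact hCneg.trans (mul_nonneg (Real.sqrt_nonneg _) (Real.sqrt_nonneg _))
  · have hApos : 0 < A := by
      rcases hA0.lt_or_eq with h | h
      · exact h
      · exfalso
        have hk := key ((B + 1) / (2 * C)) 1
        rw [← h] at hk
        have h2 : (B + 1) / (2 * C) * C = (B + 1) / 2 := by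
          field_simp
        nlinarith [hk, h2, hB0]
    have hC2 : C ^ 2 ≤ A * B := by nlinarith [key C A]
    calc C = Real.sqrt (C ^ 2) := by rw [Real.sqrt_sq hCpos.le]
      _ ≤ Real.sqrt (A * B) := Real.sqrt_le_sqrt hC2
      _ = Real.sqrt A * Real.sqrt B := Real.sqrt_mul hA0 B

/-- The `L²` norm of a function on `ℝ^D` (square root of the integral of `‖f‖²`). -/
noncomputable def L2norm (D : ℕ) (f : EuclideanSpace ℝ (Fin D) → ℂ) : ℝ :=
  Real.sqrt (∫ x : EuclideanSpace ℝ (Fin D), ‖f x‖ ^ 2)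

/-- for a Schwartz function `ψ` on `ℝ^D`, `j ∈ {1,…,D}` and `x₀, p₀ ∈ ℝ`,
`‖(x_j − x₀)ψ‖_{L²} + ‖−iℏ ∂_j ψ − p₀ ψ‖_{L²} ≥ √ℏ ‖ψ‖_{L²}`. -/
theorem uncertainty_sum (D : ℕ) (hD : 1 ≤ D) (ℏ : ℝ) (hℏ : 0 < ℏ)
    (ψ : SchwartzMap (EuclideanSpace ℝ (Fin D)) ℂ) (j : Fin D) (x₀ p₀ : ℝ) :
    L2norm D (fun x => ((x j : ℂ) - (x₀ : ℂ)) * ψ x) +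
      L2norm D (fun x =>
        (-Complex.I * (ℏ : ℂ)) * fderiv ℝ (⇑ψ) x (EuclideanSpace.single j 1)
          - (p₀ : ℂ) * ψ x)
      ≥ Real.sqrt ℏ * L2norm D (fun x => ψ x) := by
  set v : EuclideanSpace ℝ (Fin D) := EuclideanSpace.single j 1 with hv
  set Dψ : SchwartzMap (EuclideanSpace ℝ (Fin D)) ℂ := LineDeriv.lineDerivOp v ψ with hDψdef
  have hDapp : ∀ x, fderiv ℝ (⇑ψ) x v = Dψ x :=
    fun x => (SchwartzMap.lineDerivOp_apply_eq_fderiv v ψ x).symm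
  set A : EuclideanSpace ℝ (Fin D) → ℂ := fun x => ((x j : ℂ) - (x₀ : ℂ)) * ψ x with hA
  set BS : EuclideanSpace ℝ (Fin D) → ℂ := fun x =>
    (-Complex.I * (ℏ : ℂ)) * fderiv ℝ (⇑ψ) x v - (p₀ : ℂ) * ψ x with hBS
  set Bf : EuclideanSpace ℝ (Fin D) → ℂ := fun x =>
    (-Complex.I * (ℏ : ℂ)) * Dψ x - (p₀ : ℂ) * ψ x with hBf
  have hBSBf : BS = Bf := by
    funext x
    simp only [hBS, hBf, hDapp x]
  rw [hBSBf]
  -- constants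
  set Cψ : ℝ := SchwartzMap.seminorm ℝ 0 0 ψ with hCψdef
  set CD : ℝ := SchwartzMap.seminorm ℝ 0 0 Dψ with hCDdef
  have hCψ : ∀ x, ‖ψ x‖ ≤ Cψ := fun x => ψ.norm_le_seminorm ℝ x
  have hCD : ∀ x, ‖Dψ x‖ ≤ CD := fun x => Dψ.norm_le_seminorm ℝ x
  have hCψ0 : 0 ≤ Cψ := (norm_nonneg _).trans (hCψ 0)
  have hCD0 : 0 ≤ CD := (norm_nonneg _).trans (hCD 0)
  -- coordinate bound
  have hcoordle : ∀ x : EuclideanSpace ℝ (Fin D), |x j| ≤ ‖x‖ := by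
    intro x
    rw [EuclideanSpace.norm_eq]
    refine le_trans ?_ (Real.sqrt_le_sqrt (Finset.single_le_sum
      (f := fun i => ‖x i‖ ^ 2) (fun i _ => by positivity) (Finset.mem_univ j)))
    rw [Real.sqrt_sq_eq_abs]
    simp
  -- norm bounds
  have hAle : ∀ x, ‖A x‖ ≤ (‖x‖ + |x₀|) * ‖ψ x‖ := by
    intro x
    have h1 : ‖A x‖ = |x j - x₀| * ‖ψ x‖ := by
      rw [hA]
      simp only [norm_mul]
      congr 1
      rw [show ((x j : ℂ) - (x₀ : ℂ)) = ((x j - x₀ : ℝ) : ℂ) by push_cast; ring,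
        Complex.norm_real, Real.norm_eq_abs]
    rw [h1]
    have h2 : |x j - x₀| ≤ ‖x‖ + |x₀| :=
      (abs_sub (x j) x₀).trans (add_le_add (hcoordle x) le_rfl)
    exact mul_le_mul_of_nonneg_right h2 (norm_nonneg _)
  have hBle : ∀ x, ‖Bf x‖ ≤ ℏ * ‖Dψ x‖ + |p₀| * ‖ψ x‖ := by
    intro x
    rw [hBf]
    refine (norm_sub_le _ _).trans ?_
    simp only [norm_mul]
    gcongr
    · rw [norm_neg, Complex.norm_I, one_mul]
      simp [Complex.norm_real, abs_of_pos hℏ]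
    · simp [Complex.norm_real]
  -- integrability helpers
  have hψint : Integrable (⇑ψ) volume := ψ.integrable
  have hψn : Integrable (fun x => ‖ψ x‖) volume := hψint.norm
  have hDn : Integrable (fun x => ‖Dψ x‖) volume := Dψ.integrable.norm
  have hint1 : Integrable (fun x : EuclideanSpace ℝ (Fin D) => (‖x‖ + |x₀|) * ‖ψ x‖) volume := by
    have h1 := ψ.integrable_pow_mul (μ := volume) 1
    have heq : (fun x : EuclideanSpace ℝ (Fin D) => (‖x‖ + |x₀|) * ‖ψ x‖)
        = fun x => ‖x‖ ^ 1 * ‖ψ x‖ + |x₀| * ‖ψ x‖ := funext fun x => by ring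
    rw [heq]
    exact h1.add (hψn.const_mul _)
  have hint2 : Integrable (fun x : EuclideanSpace ℝ (Fin D) => (‖x‖ + |x₀|) ^ 2 * ‖ψ x‖) volume := by
    have h2 := ψ.integrable_pow_mul (μ := volume) 2
    have h1 := ψ.integrable_pow_mul (μ := volume) 1
    have heq : (fun x : EuclideanSpace ℝ (Fin D) => (‖x‖ + |x₀|) ^ 2 * ‖ψ x‖)
        = fun x => ‖x‖ ^ 2 * ‖ψ x‖ + ((2 * |x₀|) * (‖x‖ ^ 1 * ‖ψ x‖) + |x₀| ^ 2 * ‖ψ x‖) :=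
      funext fun x => by ring
    rw [heq]
    exact h2.add ((h1.const_mul _).add (hψn.const_mul _))
  -- continuity
  have hcontψ : Continuous (⇑ψ) := ψ.continuous
  have hcontD : Continuous (⇑Dψ) := Dψ.continuous
  have hcontj : Continuous (fun x : EuclideanSpace ℝ (Fin D) => x j) :=
    (EuclideanSpace.proj (𝕜 := ℝ) j : EuclideanSpace ℝ (Fin D) →L[ℝ] ℝ).continuous
  have hAcont : Continuous A := by
    rw [hA]
    exact ((Complex.continuous_ofReal.comp hcontj).sub continuous_const).mul hcontψ
  have hBcont : Continuous Bf := by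
    rw [hBf]
    exact (continuous_const.mul hcontD).sub (continuous_const.mul hcontψ)
  -- integrable squares and products
  have K1 : Integrable (fun x : EuclideanSpace ℝ (Fin D) => ‖ψ x‖ ^ 2) volume := by
    refine (hψn.const_mul Cψ).mono' ((hcontψ.norm.pow 2).aestronglyMeasurable) ?_
    refine Filter.Eventually.of_forall fun x => ?_
    rw [Real.norm_eq_abs, abs_of_nonneg (by positivity)]
    nlinarith [hCψ x, norm_nonneg (ψ x)]
  have K2 : Integrable (fun x => ‖A x‖ * ‖Bf x‖) volume := by
    refine (hint1.const_mul (ℏ * CD + |p₀| * Cψ)).mono'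
      ((hAcont.norm.mul hBcont.norm).aestronglyMeasurable) ?_
    refine Filter.Eventually.of_forall fun x => ?_
    rw [Real.norm_eq_abs, abs_of_nonneg (by positivity)]
    have hb : ‖Bf x‖ ≤ ℏ * CD + |p₀| * Cψ := by
      refine (hBle x).trans ?_
      gcongr
      · exact hCD x
      · exact hCψ x
    have := mul_le_mul (hAle x) hb (norm_nonneg _) (by positivity)
    nlinarith [this]
  have K3 : Integrable (fun x => ‖A x‖ ^ 2) volume := by
    refine (hint2.const_mul Cψ).mono' ((hAcont.norm.pow 2).aestronglyMeasurable) ?_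
    refine Filter.Eventually.of_forall fun x => ?_
    rw [Real.norm_eq_abs, abs_of_nonneg (by positivity)]
    nlinarith [mul_le_mul (hAle x) (hAle x) (norm_nonneg (A x)) (by positivity : (0:ℝ) ≤ (‖x‖ + |x₀|) * ‖ψ x‖),
      mul_le_mul_of_nonneg_left (hCψ x) (norm_nonneg (ψ x)), sq_nonneg (‖x‖ + |x₀|),
      norm_nonneg (ψ x), hCψ0, abs_nonneg x₀, norm_nonneg x]
  have K4 : Integrable (fun x => ‖Bf x‖ ^ 2) volume := by
    have hdom : Integrable (fun x => (ℏ * CD + |p₀| * Cψ) * (ℏ * ‖Dψ x‖ + |p₀| * ‖ψ x‖)) volume := by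
      exact ((hDn.const_mul ℏ).add (hψn.const_mul |p₀|)).const_mul (ℏ * CD + |p₀| * Cψ)
    refine hdom.mono' ((hBcont.norm.pow 2).aestronglyMeasurable) ?_
    refine Filter.Eventually.of_forall fun x => ?_
    rw [Real.norm_eq_abs, abs_of_nonneg (by positivity)]
    have hb : ‖Bf x‖ ≤ ℏ * CD + |p₀| * Cψ := by
      refine (hBle x).trans ?_
      gcongr
      · exact hCD x
      · exact hCψ x
    nlinarith [mul_le_mul (hBle x) hb (norm_nonneg (Bf x))
      (by positivity : (0:ℝ) ≤ ℏ * ‖Dψ x‖ + |p₀| * ‖ψ x‖)]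
  -- derivative of f(x) = x j - x₀
  have hproj : ∀ x : EuclideanSpace ℝ (Fin D), HasFDerivAt (fun y : EuclideanSpace ℝ (Fin D) => y j)
      ((EuclideanSpace.proj j : EuclideanSpace ℝ (Fin D) →L[ℝ] ℝ)) x :=
    fun x => (EuclideanSpace.proj (𝕜 := ℝ) j : EuclideanSpace ℝ (Fin D) →L[ℝ] ℝ).hasFDerivAt
  have hfD : ∀ x : EuclideanSpace ℝ (Fin D), HasFDerivAt (fun y : EuclideanSpace ℝ (Fin D) => y j - x₀)
      ((EuclideanSpace.proj j : EuclideanSpace ℝ (Fin D) →L[ℝ] ℝ)) x :=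
    fun x => (hproj x).sub_const x₀
  have hfdiff : Differentiable ℝ (fun y : EuclideanSpace ℝ (Fin D) => y j - x₀) :=
    fun x => (hfD x).differentiableAt
  have hfderiv : ∀ x, fderiv ℝ (fun y : EuclideanSpace ℝ (Fin D) => y j - x₀) x v = 1 := by
    intro x
    rw [(hfD x).fderiv]
    simp [hv]
  -- derivative of g(x) = ‖ψ x‖^2
  have hasD : ∀ x : EuclideanSpace ℝ (Fin D), HasFDerivAt (fun y => ‖ψ y‖ ^ 2)
      (Complex.reCLM.comp (((starRingEnd ℂ) (ψ x)) • fderiv ℝ (⇑ψ) x +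
        ψ x • ((Complex.conjCLE.toContinuousLinearMap).comp (fderiv ℝ (⇑ψ) x)))) x := by
    intro x
    have h1 : HasFDerivAt (⇑ψ) (fderiv ℝ (⇑ψ) x) x := ψ.differentiableAt.hasFDerivAt
    have h2 : HasFDerivAt (fun y => (starRingEnd ℂ) (ψ y))
        ((Complex.conjCLE.toContinuousLinearMap).comp (fderiv ℝ (⇑ψ) x)) x :=
      (Complex.conjCLE.toContinuousLinearMap.hasFDerivAt).comp x h1
    have h3 := h2.mul h1
    have h4 := Complex.reCLM.hasFDerivAt.comp x h3
    have hfun : (fun y => ((starRingEnd ℂ) (ψ y) * ψ y).re) = fun y => ‖ψ y‖ ^ 2 := by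
      funext y
      rw [mul_comm, Complex.mul_conj]
      simp [Complex.normSq_eq_norm_sq, ← Complex.ofReal_pow]
    rw [← hfun]
    exact h4
  have hgdiff : Differentiable ℝ (fun y : EuclideanSpace ℝ (Fin D) => ‖ψ y‖ ^ 2) :=
    fun x => (hasD x).differentiableAt
  have hgderiv : ∀ x, fderiv ℝ (fun y : EuclideanSpace ℝ (Fin D) => ‖ψ y‖ ^ 2) x v
      = 2 * ((starRingEnd ℂ) (ψ x) * Dψ x).re := by
    intro x
    rw [(hasD x).fderiv]
    simp only [ContinuousLinearMap.coe_comp', Function.comp_apply,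
      ContinuousLinearMap.add_apply, ContinuousLinearMap.coe_smul', Pi.smul_apply,
      smul_eq_mul, ContinuousLinearEquiv.coe_coe, Complex.conjCLE_apply]
    rw [hDapp x]
    simp only [Complex.reCLM_apply, Complex.add_re, Complex.mul_re, Complex.conj_re,
      Complex.conj_im]
    ring
  -- integration by parts
  have i1 : Integrable (fun x : EuclideanSpace ℝ (Fin D) =>
      fderiv ℝ (fun y : EuclideanSpace ℝ (Fin D) => y j - x₀) x v * ‖ψ x‖ ^ 2) volume := by
    have heq : (fun x : EuclideanSpace ℝ (Fin D) =>
        fderiv ℝ (fun y : EuclideanSpace ℝ (Fin D) => y j - x₀) x v * ‖ψ x‖ ^ 2)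
        = fun x => ‖ψ x‖ ^ 2 := funext fun x => by rw [hfderiv x, one_mul]
    rw [heq]; exact K1
  have i2 : Integrable (fun x : EuclideanSpace ℝ (Fin D) =>
      (x j - x₀) * fderiv ℝ (fun y : EuclideanSpace ℝ (Fin D) => ‖ψ y‖ ^ 2) x v) volume := by
    have heq : (fun x : EuclideanSpace ℝ (Fin D) =>
        (x j - x₀) * fderiv ℝ (fun y : EuclideanSpace ℝ (Fin D) => ‖ψ y‖ ^ 2) x v)
        = fun x => (x j - x₀) * (2 * ((starRingEnd ℂ) (ψ x) * Dψ x).re) :=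
      funext fun x => by rw [hgderiv x]
    rw [heq]
    refine (hint1.const_mul (2 * CD)).mono' ?_ ?_
    · refine Continuous.aestronglyMeasurable ?_
      refine ((hcontj.sub continuous_const).mul (continuous_const.mul ?_))
      refine Complex.continuous_re.comp ?_
      simp only [starRingEnd_apply]
      exact (continuous_star.comp hcontψ).mul hcontD
    · refine Filter.Eventually.of_forall fun x => ?_
      rw [Real.norm_eq_abs, abs_mul, abs_mul]
      have h1 : |x j - x₀| ≤ ‖x‖ + |x₀| :=
        (abs_sub (x j) x₀).trans (add_le_add (hcoordle x) le_rfl)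
      have h2 : |((starRingEnd ℂ) (ψ x) * Dψ x).re| ≤ ‖ψ x‖ * ‖Dψ x‖ := by
        refine (Complex.abs_re_le_norm _).trans ?_
        rw [norm_mul]
        gcongr
        rw [RCLike.norm_conj]
      have h3 : ‖ψ x‖ * ‖Dψ x‖ ≤ ‖ψ x‖ * CD :=
        mul_le_mul_of_nonneg_left (hCD x) (norm_nonneg _)
      have h4 : |(2 : ℝ)| = 2 := by norm_num
      rw [h4]
      have h5 := mul_le_mul h1 (mul_le_mul_of_nonneg_left (h2.trans h3) (by norm_num : (0:ℝ) ≤ 2))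
        (by positivity) (by positivity)
      calc |x j - x₀| * (2 * |((starRingEnd ℂ) (ψ x) * Dψ x).re|)
          ≤ (‖x‖ + |x₀|) * (2 * (‖ψ x‖ * CD)) := h5
        _ = 2 * CD * ((‖x‖ + |x₀|) * ‖ψ x‖) := by ring
  have i3 : Integrable (fun x : EuclideanSpace ℝ (Fin D) => (x j - x₀) * ‖ψ x‖ ^ 2) volume := by
    refine (hint1.const_mul Cψ).mono' ?_ ?_
    · exact (((hcontj.sub continuous_const)).mul (hcontψ.norm.pow 2)).aestronglyMeasurable
    · refine Filter.Eventually.of_forall fun x => ?_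
      rw [Real.norm_eq_abs, abs_mul, abs_of_nonneg (by positivity : (0:ℝ) ≤ ‖ψ x‖ ^ 2)]
      have h1 : |x j - x₀| ≤ ‖x‖ + |x₀| :=
        (abs_sub (x j) x₀).trans (add_le_add (hcoordle x) le_rfl)
      have h2 : ‖ψ x‖ ^ 2 ≤ Cψ * ‖ψ x‖ := by nlinarith [hCψ x, norm_nonneg (ψ x)]
      calc |x j - x₀| * ‖ψ x‖ ^ 2 ≤ (‖x‖ + |x₀|) * (Cψ * ‖ψ x‖) :=
            mul_le_mul h1 h2 (by positivity) (by positivity)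
        _ = Cψ * ((‖x‖ + |x₀|) * ‖ψ x‖) := by ring
  have hibp : (∫ x : EuclideanSpace ℝ (Fin D),
        (x j - x₀) * fderiv ℝ (fun y : EuclideanSpace ℝ (Fin D) => ‖ψ y‖ ^ 2) x v)
      = - ∫ x : EuclideanSpace ℝ (Fin D),
        fderiv ℝ (fun y : EuclideanSpace ℝ (Fin D) => y j - x₀) x v * ‖ψ x‖ ^ 2 :=
    integral_mul_fderiv_eq_neg_fderiv_mul_of_integrable i1 i2 i3 (fun x _ => hfdiff x) (fun x _ => hgdiff x)
  -- pointwise identity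
  have hpt : ∀ x, (x j - x₀) * (2 * ((starRingEnd ℂ) (ψ x) * Dψ x).re)
      = -(2 / ℏ) * ((starRingEnd ℂ) (A x) * Bf x).im := by
    intro x
    simp only [hA, hBf, map_mul, map_sub, Complex.conj_ofReal]
    simp only [Complex.mul_im, Complex.mul_re, Complex.sub_re, Complex.sub_im,
      Complex.conj_re, Complex.conj_im, Complex.I_re, Complex.I_im, Complex.ofReal_re,
      Complex.ofReal_im, Complex.neg_re, Complex.neg_im]
    field_simp
    ring
  have e1 : (∫ x : EuclideanSpace ℝ (Fin D),
        fderiv ℝ (fun y : EuclideanSpace ℝ (Fin D) => y j - x₀) x v * ‖ψ x‖ ^ 2)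
      = ∫ x : EuclideanSpace ℝ (Fin D), ‖ψ x‖ ^ 2 :=
    integral_congr_ae (Filter.Eventually.of_forall fun x => by
      show fderiv ℝ (fun y : EuclideanSpace ℝ (Fin D) => y j - x₀) x v * ‖ψ x‖ ^ 2 = ‖ψ x‖ ^ 2
      rw [hfderiv x, one_mul])
  have e2 : (∫ x : EuclideanSpace ℝ (Fin D),
        (x j - x₀) * fderiv ℝ (fun y : EuclideanSpace ℝ (Fin D) => ‖ψ y‖ ^ 2) x v)
      = ∫ x : EuclideanSpace ℝ (Fin D), (-(2 / ℏ)) * ((starRingEnd ℂ) (A x) * Bf x).im :=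
    integral_congr_ae (Filter.Eventually.of_forall fun x => by
      show (x j - x₀) * fderiv ℝ (fun y : EuclideanSpace ℝ (Fin D) => ‖ψ y‖ ^ 2) x v
        = -(2 / ℏ) * ((starRingEnd ℂ) (A x) * Bf x).im
      rw [hgderiv x, hpt x])
  have key : (∫ x : EuclideanSpace ℝ (Fin D), ‖ψ x‖ ^ 2)
      = (2 / ℏ) * ∫ x : EuclideanSpace ℝ (Fin D), ((starRingEnd ℂ) (A x) * Bf x).im := by
    calc (∫ x : EuclideanSpace ℝ (Fin D), ‖ψ x‖ ^ 2)
        = ∫ x : EuclideanSpace ℝ (Fin D),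
            fderiv ℝ (fun y : EuclideanSpace ℝ (Fin D) => y j - x₀) x v * ‖ψ x‖ ^ 2 := e1.symm
      _ = - ∫ x : EuclideanSpace ℝ (Fin D),
            (x j - x₀) * fderiv ℝ (fun y : EuclideanSpace ℝ (Fin D) => ‖ψ y‖ ^ 2) x v := by
            rw [hibp, neg_neg]
      _ = - ∫ x : EuclideanSpace ℝ (Fin D),
            (-(2 / ℏ)) * ((starRingEnd ℂ) (A x) * Bf x).im := by rw [e2]
      _ = (2 / ℏ) * ∫ x : EuclideanSpace ℝ (Fin D), ((starRingEnd ℂ) (A x) * Bf x).im := by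
            rw [integral_const_mul]; ring
  -- bound the imaginary part integral
  have hptle : ∀ x, ((starRingEnd ℂ) (A x) * Bf x).im ≤ ‖A x‖ * ‖Bf x‖ := by
    intro x
    refine (le_abs_self _).trans ?_
    refine (Complex.abs_im_le_norm _).trans ?_
    rw [norm_mul, RCLike.norm_conj]
  have hintIm : Integrable (fun x => ((starRingEnd ℂ) (A x) * Bf x).im) volume := by
    refine K2.mono' ?_ ?_
    · refine Continuous.aestronglyMeasurable ?_
      refine Complex.continuous_im.comp ?_
      simp only [starRingEnd_apply]
      exact (continuous_star.comp hAcont).mul hBcont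
    · refine Filter.Eventually.of_forall fun x => ?_
      rw [Real.norm_eq_abs]
      refine (Complex.abs_im_le_norm _).trans ?_
      rw [norm_mul, RCLike.norm_conj]
  have hIm_le : (∫ x : EuclideanSpace ℝ (Fin D), ((starRingEnd ℂ) (A x) * Bf x).im)
      ≤ ∫ x : EuclideanSpace ℝ (Fin D), ‖A x‖ * ‖Bf x‖ :=
    integral_mono hintIm K2 fun x => hptle x
  have hCS := integral_cauchy_schwarz (f := fun x => ‖A x‖) (g := fun x => ‖Bf x‖)
    (μ := (volume : Measure (EuclideanSpace ℝ (Fin D)))) K3 K4 K2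
  -- conclude
  simp only [L2norm]
  have hn0 : 0 ≤ ∫ x : EuclideanSpace ℝ (Fin D), ‖ψ x‖ ^ 2 :=
    integral_nonneg fun x => sq_nonneg _
  have hmain : ℏ * (∫ x : EuclideanSpace ℝ (Fin D), ‖ψ x‖ ^ 2)
      ≤ 2 * (Real.sqrt (∫ x : EuclideanSpace ℝ (Fin D), ‖A x‖ ^ 2)
        * Real.sqrt (∫ x : EuclideanSpace ℝ (Fin D), ‖Bf x‖ ^ 2)) := by
    have h2 : (∫ x : EuclideanSpace ℝ (Fin D), ((starRingEnd ℂ) (A x) * Bf x).im)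
        ≤ Real.sqrt (∫ x : EuclideanSpace ℝ (Fin D), ‖A x‖ ^ 2)
          * Real.sqrt (∫ x : EuclideanSpace ℝ (Fin D), ‖Bf x‖ ^ 2) := hIm_le.trans hCS
    calc ℏ * (∫ x : EuclideanSpace ℝ (Fin D), ‖ψ x‖ ^ 2)
        = ℏ * ((2 / ℏ) * ∫ x : EuclideanSpace ℝ (Fin D), ((starRingEnd ℂ) (A x) * Bf x).im) := by
          rw [key]
      _ = 2 * ∫ x : EuclideanSpace ℝ (Fin D), ((starRingEnd ℂ) (A x) * Bf x).im := by
          field_simp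
      _ ≤ 2 * (Real.sqrt (∫ x : EuclideanSpace ℝ (Fin D), ‖A x‖ ^ 2)
          * Real.sqrt (∫ x : EuclideanSpace ℝ (Fin D), ‖Bf x‖ ^ 2)) := by linarith [h2]
  have ha0 : 0 ≤ Real.sqrt (∫ x : EuclideanSpace ℝ (Fin D), ‖A x‖ ^ 2) := Real.sqrt_nonneg _
  have hb0 : 0 ≤ Real.sqrt (∫ x : EuclideanSpace ℝ (Fin D), ‖Bf x‖ ^ 2) := Real.sqrt_nonneg _
  have hs1 : Real.sqrt ℏ ^ 2 = ℏ := Real.sq_sqrt hℏ.le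
  have hs2 : Real.sqrt (∫ x : EuclideanSpace ℝ (Fin D), ‖ψ x‖ ^ 2) ^ 2
      = ∫ x : EuclideanSpace ℝ (Fin D), ‖ψ x‖ ^ 2 := Real.sq_sqrt hn0
  rw [ge_iff_le]
  nlinarith [hmain, ha0, hb0, hs1, hs2, Real.sqrt_nonneg ℏ,
    Real.sqrt_nonneg (∫ x : EuclideanSpace ℝ (Fin D), ‖ψ x‖ ^ 2),
    mul_nonneg (Real.sqrt_nonneg ℏ) (Real.sqrt_nonneg (∫ x : EuclideanSpace ℝ (Fin D), ‖ψ x‖ ^ 2))]
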